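/- Lemma 3.6 (determinant factorization at t₂ = 1): for every i ≥ 1, det B_{2i}(q,t,1;λ) = det B̄_i(q,t;λ) · ∏_{j=2}^{i} (q^{2(2j−2)}t^{−1} + q^{−2(2j−2)}t − λ − λ^{−1}) in K[λ,λ^{−1}]. -/

import Mathlib

noncomputable section

open LaurentPolynomial

/-- The field `K = ℚ(q, t)` of rational functions in two indeterminates. -/
abbrev K : Type := FractionRing (MvPolynomial (Fin 2) ℚ)

def q : K := algebraMap (MvPolynomial (Fin 2) ℚ) K (MvPolynomial.X 0)
def t : K := algebraMap (MvPolynomial (Fin 2) ℚ) K (MvPolynomial.X 1)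

/-- `{m} = q^m − q^{−m}`. -/
def br (m : ℤ) : K := q ^ m - q ^ (-m)

/-- The balanced q-binomial coefficient `[n choose m]_{q²}`. -/
def qbinom (n m : ℕ) : K :=
  ∏ k ∈ Finset.range m,
    (q ^ (2 * ((n : ℤ) - k)) - q ^ (-(2 * ((n : ℤ) - k)))) /
      (q ^ (2 * ((m : ℤ) - k)) - q ^ (-(2 * ((m : ℤ) - k))))

/-- `α_k^{(i)} = (−1)^{i−k} [2i−1 choose i−k]_{q²}`. -/
def alpha (i k : ℕ) : K := (-1 : K) ^ (i - k) * qbinom (2 * i - 1) (i - k)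

/-- `[m]_{q²} = (q^{2m} − q^{−2m})/(q² − q^{−2})`. -/
def qnum (m : ℤ) : K := (q ^ (2 * m) - q ^ (-(2 * m))) / (q ^ (2 : ℤ) - q ^ (-2 : ℤ))

/-- `γ_p = q^{2p}t^{−1} + q^{−2p}t − λ − λ^{−1}` as an element of `K[λ,λ^{−1}]`. -/
def gamL (p : ℕ) : LaurentPolynomial K :=
  C (q ^ (2 * (p : ℤ)) * t⁻¹ + q ^ (-(2 * (p : ℤ))) * t) - T 1 - T (-1)

/-- The matrix `B_{2i}(q,t,1;λ)` (the matrix `B_{2i}` with `t₁ = t`, `t₂ = 1`),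
over `K[λ,λ^{−1}]`, with rows and columns indexed by `0,…,2i−1`. -/
def B2 (i : ℕ) : Matrix (Fin (2 * i)) (Fin (2 * i)) (LaurentPolynomial K) :=
  Matrix.of fun p N =>
    if (p : ℕ) = 0 then
      (if (N : ℕ) % 2 = 1 then C (alpha i (((N : ℕ) + 1) / 2)) else 0)
    else if (N : ℕ) = 0 then C (qnum ((p : ℕ) : ℤ))
    else if (N : ℕ) = (p : ℕ) then gamL (p : ℕ)
    else if (N : ℕ) < (p : ℕ) ∧ ((p : ℕ) - (N : ℕ)) % 2 = 0 then
      C (-((br ((p : ℕ) + (N : ℕ) : ℤ) - br ((p : ℕ) - (N : ℕ) : ℤ)) * (t - t⁻¹)))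
    else 0

/-- The reduced matrix `B̄_i(q,t;λ)`, over `K[λ,λ^{−1}]`, rows and columns indexed by
`0,…,i`: row 0 is `(0, α_1^{(i)}, …, α_i^{(i)})`; column 0 carries `[2j−1]_{q²}`;
the diagonal carries `γ_{2j−1}`; below the diagonal sit the entries
`−({2(j+k−1)} − {2(j−k)})(t − t^{−1})`; everything above the diagonal (outside row 0)
vanishes. -/
def Bbar (i : ℕ) : Matrix (Fin (i + 1)) (Fin (i + 1)) (LaurentPolynomial K) :=
  Matrix.of fun j k =>
    if (j : ℕ) = 0 then (if (k : ℕ) = 0 then 0 else C (alpha i (k : ℕ)))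
    else if (k : ℕ) = 0 then C (qnum (2 * ((j : ℕ) : ℤ) - 1))
    else if (k : ℕ) = (j : ℕ) then gamL (2 * (j : ℕ) - 1)
    else if (k : ℕ) < (j : ℕ) then
      C (-((br (2 * (((j : ℕ) : ℤ) + ((k : ℕ) : ℤ) - 1)) - br (2 * (((j : ℕ) : ℤ) - ((k : ℕ) : ℤ))))
        * (t - t⁻¹)))
    else 0

/- STATEMENT 13: Lemma 3.6 (determinant factorization at t₂ = 1): for every i ≥ 1,
det B_{2i}(q,t,1;λ) = det B̄_i(q,t;λ) · ∏_{j=2}^{i} (q^{2(2j−2)}t^{−1} + q^{−2(2j−2)}t − λ − λ^{−1})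
in K[λ,λ^{−1}]. -/
lemma alpha_congr {i u v : ℕ} (h : u = v) : (C (alpha i u) : LaurentPolynomial K) = C (alpha i v) := by rw [h]

lemma qnum_congr {u v : ℤ} (h : u = v) : (C (qnum u) : LaurentPolynomial K) = C (qnum v) := by rw [h]

lemma gamL_congr {u v : ℕ} (h : u = v) : gamL u = gamL v := by rw [h]

lemma br_congr {x y x' y' : ℤ} (hx : x = x') (hy : y = y') :
    (C (-((br x - br y) * (t - t⁻¹))) : LaurentPolynomial K)
      = C (-((br x' - br y') * (t - t⁻¹))) := by rw [hx, hy]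

set_option maxHeartbeats 1000000 in
theorem determinant_factorization_at_t2_eq_one (i : ℕ) (hi : 1 ≤ i) :
    (B2 i).det = (Bbar i).det * ∏ j ∈ Finset.Icc 2 i, gamL (2 * j - 2) := by
  obtain ⟨m, rfl⟩ : ∃ m, i = m + 1 := ⟨i - 1, by omega⟩
  clear hi
  set f : Fin (m + 1 + 1) ⊕ Fin m → Fin (2 * (m + 1)) := fun x =>
    match x with
    | Sum.inl j => ⟨2 * (j : ℕ) - 1, by have := j.2; omega⟩
    | Sum.inr k => ⟨2 * (k : ℕ) + 2, by have := k.2; omega⟩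
    with hf
  have hvl : ∀ j : Fin (m + 1 + 1), ((f (Sum.inl j)) : ℕ) = 2 * (j : ℕ) - 1 := fun _ => rfl
  have hvr : ∀ k : Fin m, ((f (Sum.inr k)) : ℕ) = 2 * (k : ℕ) + 2 := fun _ => rfl
  have hinj : Function.Injective f := by
    rintro (a | a) (b | b) h <;>
      · have h' := congrArg Fin.val h
        simp only [hf] at h'
        have ha := a.2; have hb := b.2
        first
          | (apply congrArg; exact Fin.ext (by omega))
          | omega
  have hbij : Function.Bijective f := by
    refine (Fintype.bijective_iff_injective_and_card f).mpr ⟨hinj, ?_⟩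
    simp; omega
  set e : (Fin (m + 1 + 1) ⊕ Fin m) ≃ Fin (2 * (m + 1)) := Equiv.ofBijective f hbij with he
  have hdet : (B2 (m + 1)).det = ((B2 (m + 1)).submatrix e e).det :=
    (Matrix.det_submatrix_equiv_self e _).symm
  set E : Matrix (Fin m) (Fin m) (LaurentPolynomial K) :=
    (B2 (m + 1)).submatrix (f ∘ Sum.inr) (f ∘ Sum.inr) with hE
  set D : Matrix (Fin m) (Fin (m + 1 + 1)) (LaurentPolynomial K) :=
    (B2 (m + 1)).submatrix (f ∘ Sum.inr) (f ∘ Sum.inl) with hD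
  have hblock : (B2 (m + 1)).submatrix e e = Matrix.fromBlocks (Bbar (m + 1)) 0 D E := by
    refine Matrix.ext fun x y => ?_
    have hee : ∀ z, e z = f z := fun z => rfl
    rcases x with (a | a) <;> rcases y with (b | b) <;>
      simp only [Matrix.submatrix_apply, hee, Matrix.fromBlocks_apply₁₁,
        Matrix.fromBlocks_apply₁₂, Matrix.fromBlocks_apply₂₁, Matrix.fromBlocks_apply₂₂,
        hD, hE, Function.comp]
    · -- inl inl : equals Bbar
      have ha := a.2; have hb := b.2
      simp only [B2, Bbar, Matrix.of_apply, hvl]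
      split_ifs <;>
        first
          | rfl
          | contradiction
          | omega
          | (exfalso; omega)
          | exact alpha_congr (by omega)
          | exact qnum_congr (by omega)
          | exact gamL_congr (by omega)
          | exact br_congr (by omega) (by omega)
    · -- inl inr : zero
      have ha := a.2; have hb := b.2
      simp only [B2, Matrix.of_apply, hvl, hvr, Matrix.zero_apply]
      split_ifs <;> first | rfl | contradiction | omega | (exfalso; omega)
  rw [hdet, hblock, Matrix.det_fromBlocks_zero₁₂]
  congr 1
  have hEtri : E.BlockTriangular OrderDual.toDual := by
    intro x y hxy
    have hxy' : (x : ℕ) < (y : ℕ) := hxy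
    simp only [hE, Matrix.submatrix_apply, Function.comp, B2, Matrix.of_apply, hvr]
    split_ifs <;> first | rfl | contradiction | omega | (exfalso; omega)
  rw [Matrix.det_of_lowerTriangular E hEtri]
  have hdiag : ∀ k : Fin m, E k k = gamL (2 * (k : ℕ) + 2) := by
    intro k
    simp only [hE, Matrix.submatrix_apply, Function.comp, B2, Matrix.of_apply, hvr]
    split_ifs <;> first | rfl | contradiction | omega | (exfalso; omega)
  rw [Finset.prod_congr rfl (fun k _ => hdiag k)]
  rw [Fin.prod_univ_eq_prod_range (fun k => gamL (2 * k + 2)) m]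
  refine Finset.prod_nbij' (fun k => k + 2) (fun j => j - 2) ?_ ?_ ?_ ?_ ?_ <;>
    · intro x hx
      simp only [Finset.mem_Icc, Finset.mem_range] at *
      first | omega | exact gamL_congr (by omega)

end
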